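/- Assume: (a) for every x ∈ H and every λ ∈ A(r⁻,r⁺) the series Σ_{n≥1}(P_E Tⁿ x)λ^{-n} + Σ_{n≥0}(P_E T'*ⁿ x)λⁿ converges in E; (b) for every x ∈ H and every λ ∈ A(r'⁻,r'⁺) the series Σ_{n≥1}(P_E T'ⁿ x)λ^{-n} + Σ_{n≥0}(P_E T*ⁿ x)λⁿ converges in E; (c) r⁻ < 1 and r'⁻ ≤ 1 ≤ r'⁺. Let x ∈ H satisfy limsup_{n→∞} ‖P_E T'*ⁿ x‖^{1/n} = 0. Then the relevant series converge absolutely and the following two conditions are equivalent: (1) Σ_{n≥1} T'*ⁿ P_E Tⁿ x + Σ_{n≥0} Tⁿ P_E T'*ⁿ x = x; (2) for every y ∈ H: ⟨x, y⟩ = Σ_{n≥1} ⟨P_E Tⁿ x, P_E T'ⁿ y⟩ + Σ_{n≥0} ⟨P_E T'*ⁿ x, P_E T*ⁿ y⟩ (the Cauchy pairing of the Laurent coefficients of x with those of y). -/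

import Mathlib

set_option maxHeartbeats 1000000


open ContinuousLinearMap

/-- Orthogonal projection onto the closed subspace `E`, as an operator `H →L[ℂ] H`. -/
noncomputable def PE {H : Type*} [NormedAddCommGroup H] [InnerProductSpace ℂ H]
    (E : Submodule ℂ H) [CompleteSpace E] : H →L[ℂ] H :=
  E.subtypeL.comp E.orthogonalProjectionOnto

/-- The open annulus A(a,b) = {z ∈ ℂ : a < |z| < b}. -/
def annulus (a b : ℝ) : Set ℂ := {z : ℂ | a < ‖z‖ ∧ ‖z‖ < b}

section aux
variable {H : Type*} [NormedAddCommGroup H] [InnerProductSpace ℂ H] [CompleteSpace H]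
variable (E : Submodule ℂ H) [CompleteSpace E]

lemma PE_idem (u : H) : PE E (PE E u) = PE E u := by
  simp [PE, Submodule.orthogonalProjectionOnto_mem_subspace_eq_self, Submodule.starProjection_eq_self_iff]

lemma adjoint_PE : ContinuousLinearMap.adjoint (PE E) = PE E := by
  unfold PE
  exact (isSelfAdjoint_starProjection E).adjoint_eq

lemma inner_PE (a b : H) : (inner ℂ a (PE E b) : ℂ) = inner ℂ (PE E a) (PE E b) := by
  rw [← adjoint_inner_right (PE E) a (PE E b), adjoint_PE, PE_idem]

lemma adj_pow (A : H →L[ℂ] H) (m : ℕ) :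
    (ContinuousLinearMap.adjoint A) ^ m = ContinuousLinearMap.adjoint (A ^ m) := by
  rw [← star_eq_adjoint, ← star_eq_adjoint, star_pow]

lemma inner_adj_pow (A : H →L[ℂ] H) (m : ℕ) (y u : H) :
    (inner ℂ y (((ContinuousLinearMap.adjoint A) ^ m) (PE E u)) : ℂ)
      = inner ℂ (PE E ((A ^ m) y)) (PE E u) := by
  rw [adj_pow, adjoint_inner_right, inner_PE]

lemma inner_pow (A : H →L[ℂ] H) (m : ℕ) (y u : H) :
    (inner ℂ y ((A ^ m) (PE E u)) : ℂ)
      = inner ℂ (PE E (((ContinuousLinearMap.adjoint A) ^ m) y)) (PE E u) := by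
  have h1 : A ^ m
      = ContinuousLinearMap.adjoint ((ContinuousLinearMap.adjoint A) ^ m) := by
    rw [adj_pow, adjoint_adjoint]
  conv_lhs => rw [h1]
  rw [adjoint_inner_right, inner_PE]

end aux

/- STATEMENT 14: Under assumptions (a), (b), (c), if x ∈ H satisfies
limsup ‖P_E T'*ⁿ x‖^{1/n} = 0, then the relevant series converge absolutely and:
(1) Σ_{n≥1} T'*ⁿ P_E Tⁿ x + Σ_{n≥0} Tⁿ P_E T'*ⁿ x = x  ⟺
(2) ∀ y ∈ H, ⟨x,y⟩ = Σ_{n≥1} ⟨P_E Tⁿ x, P_E T'ⁿ y⟩ + Σ_{n≥0} ⟨P_E T'*ⁿ x, P_E T*ⁿ y⟩.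
The paper's pairing ⟨a,b⟩ (linear in a) is `inner b a` in Mathlib conventions. -/
theorem stmt_14 {H : Type*} [NormedAddCommGroup H] [InnerProductSpace ℂ H] [CompleteSpace H]
    (T T' W : H →L[ℂ] H)
    (hleft : ∃ S : H →L[ℂ] H, S.comp T = ContinuousLinearMap.id ℂ H)
    (hW1 : W.comp ((ContinuousLinearMap.adjoint T).comp T) = ContinuousLinearMap.id ℂ H)
    (hW2 : ((ContinuousLinearMap.adjoint T).comp T).comp W = ContinuousLinearMap.id ℂ H)
    (hT' : T' = T.comp W)
    (E : Submodule ℂ H) [CompleteSpace E]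
    (rm rp rm' rp' : ℝ) (hrm : 0 ≤ rm) (hr : rm < rp) (hrm' : 0 ≤ rm') (hr' : rm' < rp')
    (ha : ∀ x : H, ∀ lam ∈ annulus rm rp,
      Summable (fun n : ℕ => (lam ^ (-(n + 1 : ℤ))) • PE E ((T ^ (n + 1)) x)) ∧
      Summable (fun n : ℕ =>
        (lam ^ n) • PE E (((ContinuousLinearMap.adjoint T') ^ n) x)))
    (hb : ∀ x : H, ∀ lam ∈ annulus rm' rp',
      Summable (fun n : ℕ => (lam ^ (-(n + 1 : ℤ))) • PE E ((T' ^ (n + 1)) x)) ∧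
      Summable (fun n : ℕ =>
        (lam ^ n) • PE E (((ContinuousLinearMap.adjoint T) ^ n) x)))
    (hc1 : rm < 1) (hc2 : rm' ≤ 1) (hc3 : 1 ≤ rp')
    (x : H)
    (hx : Filter.limsup
      (fun n : ℕ => ‖PE E (((ContinuousLinearMap.adjoint T') ^ n) x)‖ ^ (1 / (n : ℝ)))
      Filter.atTop = 0) :
    Summable (fun n : ℕ =>
      ‖((ContinuousLinearMap.adjoint T') ^ (n + 1)) (PE E ((T ^ (n + 1)) x))‖) ∧
    Summable (fun n : ℕ =>
      ‖(T ^ n) (PE E (((ContinuousLinearMap.adjoint T') ^ n) x))‖) ∧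
    (∀ y : H,
      Summable (fun n : ℕ =>
        (inner ℂ (PE E ((T' ^ (n + 1)) y)) (PE E ((T ^ (n + 1)) x)) : ℂ)) ∧
      Summable (fun n : ℕ =>
        (inner ℂ (PE E (((ContinuousLinearMap.adjoint T) ^ n) y))
          (PE E (((ContinuousLinearMap.adjoint T') ^ n) x)) : ℂ))) ∧
    (((∑' n : ℕ, ((ContinuousLinearMap.adjoint T') ^ (n + 1)) (PE E ((T ^ (n + 1)) x))) +
        ∑' n : ℕ, (T ^ n) (PE E (((ContinuousLinearMap.adjoint T') ^ n) x)) = x) ↔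
      (∀ y : H,
        (inner ℂ y x : ℂ) =
          (∑' n : ℕ, (inner ℂ (PE E ((T' ^ (n + 1)) y)) (PE E ((T ^ (n + 1)) x)) : ℂ)) +
            ∑' n : ℕ, (inner ℂ (PE E (((ContinuousLinearMap.adjoint T) ^ n) y))
              (PE E (((ContinuousLinearMap.adjoint T') ^ n) x)) : ℂ))) := by
  classical
  set Ts : H →L[ℂ] H := ContinuousLinearMap.adjoint T' with hTsdef
  set Ss : H →L[ℂ] H := ContinuousLinearMap.adjoint T with hSsdef
  set F : ℕ → H := fun n => (Ts ^ (n + 1)) (PE E ((T ^ (n + 1)) x)) with hFdef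
  set G : ℕ → H := fun n => (T ^ n) (PE E ((Ts ^ n) x)) with hGdef
  -- Step 1: choose ρ ∈ (rm, min rp 1)
  obtain ⟨ρ, hρ1, hρ2⟩ := exists_between (lt_min hr hc1)
  have hρpos : 0 < ρ := lt_of_le_of_lt hrm hρ1
  have hρlt1 : ρ < 1 := lt_of_lt_of_le hρ2 (min_le_right _ _)
  have hρrp : ρ < rp := lt_of_lt_of_le hρ2 (min_le_left _ _)
  have hmem : (ρ : ℂ) ∈ annulus rm rp := by
    constructor <;> simp [Complex.norm_real, abs_of_pos hρpos] <;> assumption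
  -- boundedness of Laurent coefficients of x from (a)
  obtain ⟨Cx, hCx⟩ : ∃ C : ℝ, ∀ n : ℕ,
      ‖((ρ : ℂ) ^ (-(n + 1 : ℤ))) • PE E ((T ^ (n + 1)) x)‖ ≤ C := by
    have h1 := ((ha x (ρ : ℂ) hmem).1).tendsto_atTop_zero
    have h2 := (h1.norm).bddAbove_range
    obtain ⟨C, hC⟩ := h2
    exact ⟨C, fun n => hC ⟨n, rfl⟩⟩
  have hznorm : ∀ n : ℕ, ‖((ρ : ℂ) ^ (-(n + 1 : ℤ)))‖ = (ρ ^ (n + 1))⁻¹ := by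
    intro n
    rw [norm_zpow, Complex.norm_real, Real.norm_eq_abs, abs_of_pos hρpos]
    rw [zpow_neg]
    norm_cast
  have hcx : ∀ n : ℕ, ‖PE E ((T ^ (n + 1)) x)‖ ≤ |Cx| * ρ ^ (n + 1) := by
    intro n
    have h := hCx n
    rw [norm_smul, hznorm n] at h
    have hpow : 0 < ρ ^ (n + 1) := pow_pos hρpos _
    rw [inv_mul_le_iff₀ hpow] at h
    calc ‖PE E ((T ^ (n + 1)) x)‖ ≤ ρ ^ (n + 1) * Cx := h
      _ ≤ |Cx| * ρ ^ (n + 1) := by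
          rw [mul_comm]
          exact mul_le_mul_of_nonneg_right (le_abs_self _) hpow.le
  -- Step 2: choose ρ' ∈ (rm', min rp' ρ⁻¹)
  have hinv : (1 : ℝ) < ρ⁻¹ := (one_lt_inv₀ hρpos).mpr hρlt1
  obtain ⟨ρ', hρ'1, hρ'2⟩ := exists_between (lt_min hr' (lt_of_le_of_lt hc2 hinv))
  have hρ'pos : 0 < ρ' := lt_of_le_of_lt hrm' hρ'1
  have hρ'rp : ρ' < rp' := lt_of_lt_of_le hρ'2 (min_le_left _ _)
  have hρρ' : ρ * ρ' < 1 := by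
    have h1 : ρ' < ρ⁻¹ := lt_of_lt_of_le hρ'2 (min_le_right _ _)
    calc ρ * ρ' < ρ * ρ⁻¹ := by exact mul_lt_mul_of_pos_left h1 hρpos
      _ = 1 := mul_inv_cancel₀ (ne_of_gt hρpos)
  have hmem' : (ρ' : ℂ) ∈ annulus rm' rp' := by
    constructor <;> simp [Complex.norm_real, abs_of_pos hρ'pos] <;> assumption
  -- Banach–Steinhaus: operator norm bound for PE ∘ T'^{n+1}
  obtain ⟨C', hC'⟩ : ∃ C' : ℝ, ∀ n : ℕ,
      ‖(((ρ' : ℂ) ^ (-(n + 1 : ℤ))) • ((PE E).comp (T' ^ (n + 1))) : H →L[ℂ] H)‖ ≤ C' := by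
    apply banach_steinhaus
    intro y
    have h1 := ((hb y (ρ' : ℂ) hmem').1).tendsto_atTop_zero
    obtain ⟨C, hC⟩ := (h1.norm).bddAbove_range
    refine ⟨C, fun n => ?_⟩
    have := hC ⟨n, rfl⟩
    simpa using this
  have hz'norm : ∀ n : ℕ, ‖((ρ' : ℂ) ^ (-(n + 1 : ℤ)))‖ = (ρ' ^ (n + 1))⁻¹ := by
    intro n
    rw [norm_zpow, Complex.norm_real, Real.norm_eq_abs, abs_of_pos hρ'pos]
    rw [zpow_neg]
    norm_cast
  have hop : ∀ n : ℕ, ‖(PE E).comp (T' ^ (n + 1))‖ ≤ |C'| * ρ' ^ (n + 1) := by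
    intro n
    have h := hC' n
    rw [norm_smul, hz'norm n] at h
    have hpow : 0 < ρ' ^ (n + 1) := pow_pos hρ'pos _
    rw [inv_mul_le_iff₀ hpow] at h
    calc ‖(PE E).comp (T' ^ (n + 1))‖ ≤ ρ' ^ (n + 1) * C' := h
      _ ≤ |C'| * ρ' ^ (n + 1) := by
          rw [mul_comm]
          exact mul_le_mul_of_nonneg_right (le_abs_self _) hpow.le
  have hopadj : ∀ n : ℕ, ‖(Ts ^ (n + 1)).comp (PE E)‖ ≤ |C'| * ρ' ^ (n + 1) := by
    intro n
    have he : (Ts ^ (n + 1)).comp (PE E)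
        = ContinuousLinearMap.adjoint ((PE E).comp (T' ^ (n + 1))) := by
      rw [ContinuousLinearMap.adjoint_comp, hTsdef, adj_pow, adjoint_PE]
    rw [he, ← star_eq_adjoint, norm_star]
    exact hop n
  -- norm bound for F
  have hFbound : ∀ n : ℕ, ‖F n‖ ≤ (|C'| * |Cx|) * (ρ * ρ') ^ (n + 1) := by
    intro n
    have he : F n = ((Ts ^ (n + 1)).comp (PE E)) (PE E ((T ^ (n + 1)) x)) := by
      rw [hFdef]
      simp only [ContinuousLinearMap.comp_apply, PE_idem]
    rw [he]
    calc ‖((Ts ^ (n + 1)).comp (PE E)) (PE E ((T ^ (n + 1)) x))‖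
        ≤ ‖(Ts ^ (n + 1)).comp (PE E)‖ * ‖PE E ((T ^ (n + 1)) x)‖ := le_opNorm _ _
      _ ≤ (|C'| * ρ' ^ (n + 1)) * (|Cx| * ρ ^ (n + 1)) := by
          apply mul_le_mul (hopadj n) (hcx n) (norm_nonneg _)
          positivity
      _ = (|C'| * |Cx|) * (ρ * ρ') ^ (n + 1) := by ring
  have hFnormsum : Summable (fun n : ℕ => ‖F n‖) := by
    apply Summable.of_nonneg_of_le (fun n => norm_nonneg _)
      (fun n => (hFbound n).trans_eq (by ring : (|C'| * |Cx|) * (ρ * ρ') ^ (n + 1)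
        = ((|C'| * |Cx|) * (ρ * ρ')) * (ρ * ρ') ^ n))
    exact (summable_geometric_of_lt_one (by positivity) hρρ').mul_left _
  -- Step 3: superexponential decay of PE (Ts^n x)
  have hKL : ∃ M : ℝ, ∀ n : ℕ, ‖PE E ((Ts ^ n) x)‖ ^ (1 / (n : ℝ)) ≤ M := by
    set K : ℝ := ‖PE E‖ * ‖x‖ + 1 with hK
    set L : ℝ := ‖Ts‖ + 1 with hL
    have hK1 : 1 ≤ K := by
      rw [hK]; linarith [mul_nonneg (norm_nonneg (PE E)) (norm_nonneg x)]
    have hL1 : 1 ≤ L := by rw [hL]; linarith [norm_nonneg Ts]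
    refine ⟨max 1 (K * L), fun n => ?_⟩
    match n with
    | 0 => simp [Real.rpow_natCast]
    | (m + 1) =>
      have hb1 : ‖PE E ((Ts ^ (m + 1)) x)‖ ≤ (K * L) ^ (m + 1) := by
        calc ‖PE E ((Ts ^ (m + 1)) x)‖ ≤ ‖PE E‖ * ‖(Ts ^ (m + 1)) x‖ := le_opNorm _ _
          _ ≤ ‖PE E‖ * (‖Ts ^ (m + 1)‖ * ‖x‖) :=
              mul_le_mul_of_nonneg_left (le_opNorm _ _) (norm_nonneg _)
          _ ≤ ‖PE E‖ * (‖Ts‖ ^ (m + 1) * ‖x‖) := by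
              apply mul_le_mul_of_nonneg_left _ (norm_nonneg _)
              exact mul_le_mul_of_nonneg_right (norm_pow_le' _ (Nat.succ_pos m)) (norm_nonneg _)
          _ ≤ K * L ^ (m + 1) := by
              have h1 : ‖Ts‖ ^ (m + 1) ≤ L ^ (m + 1) :=
                pow_le_pow_left₀ (norm_nonneg _) (by simp [hL]) _
              have h2 : ‖PE E‖ * ‖x‖ ≤ K := by simp [hK]
              calc ‖PE E‖ * (‖Ts‖ ^ (m + 1) * ‖x‖) = (‖PE E‖ * ‖x‖) * ‖Ts‖ ^ (m + 1) := by ring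
                _ ≤ K * L ^ (m + 1) := by
                    apply mul_le_mul h2 h1 (by positivity) (by positivity)
          _ ≤ K ^ (m + 1) * L ^ (m + 1) := by
              apply mul_le_mul_of_nonneg_right (le_self_pow₀ (by linarith) (Nat.succ_ne_zero m))
              positivity
          _ = (K * L) ^ (m + 1) := (mul_pow _ _ _).symm
      have h3 : ‖PE E ((Ts ^ (m + 1)) x)‖ ^ (1 / ((m + 1 : ℕ) : ℝ))
          ≤ ((K * L) ^ (m + 1)) ^ (1 / ((m + 1 : ℕ) : ℝ)) :=
        Real.rpow_le_rpow (norm_nonneg _) hb1 (by positivity)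
      refine le_trans h3 ?_
      rw [one_div, ← Real.rpow_natCast (K * L) (m + 1), ← Real.rpow_mul (by positivity)]
      rw [mul_inv_cancel₀ (by exact_mod_cast Nat.succ_ne_zero m), Real.rpow_one]
      exact le_max_right _ _
  -- eventual smallness from limsup
  set ε : ℝ := (2 * (‖T‖ + 1))⁻¹ with hεdef
  have hεpos : 0 < ε := by rw [hεdef]; positivity
  have hbddu : Filter.IsBoundedUnder (· ≤ ·) Filter.atTop
      (fun n : ℕ => ‖PE E ((Ts ^ n) x)‖ ^ (1 / (n : ℝ))) := by
    obtain ⟨M, hM⟩ := hKL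
    exact Filter.isBoundedUnder_of ⟨M, hM⟩
  have hev : ∀ᶠ (n : ℕ) in Filter.atTop,
      ‖PE E ((Ts ^ n) x)‖ ^ (1 / (n : ℝ)) < ε := by
    apply Filter.eventually_lt_of_limsup_lt _ hbddu
    rw [hx]; exact hεpos
  have hsmall : ∀ᶠ n in Filter.atTop, ‖PE E ((Ts ^ n) x)‖ ≤ ε ^ n := by
    filter_upwards [hev, Filter.eventually_ge_atTop 1] with n h1 h2
    have hn0 : n ≠ 0 := by omega
    have h3 : (‖PE E ((Ts ^ n) x)‖ ^ (1 / (n : ℝ))) ^ n ≤ ε ^ n :=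
      pow_le_pow_left₀ (Real.rpow_nonneg (norm_nonneg _) _) h1.le n
    rwa [one_div, Real.rpow_inv_natCast_pow (norm_nonneg _) hn0] at h3
  have hGbound : ∀ᶠ (n : ℕ) in Filter.atTop, ‖G n‖ ≤ (‖T‖ * ε) ^ n := by
    filter_upwards [hsmall, Filter.eventually_ge_atTop 1] with n h1 hn1
    calc ‖G n‖ ≤ ‖T ^ n‖ * ‖PE E ((Ts ^ n) x)‖ := le_opNorm _ _
      _ ≤ ‖T‖ ^ n * ε ^ n := by
          apply mul_le_mul (norm_pow_le' _ (by omega)) h1 (norm_nonneg _) (by positivity)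
      _ = (‖T‖ * ε) ^ n := (mul_pow _ _ _).symm
  have hTε : ‖T‖ * ε < 1 := by
    rw [hεdef, mul_inv_lt_iff₀ (by positivity)]
    nlinarith [norm_nonneg T]
  have hGnormsum : Summable (fun n : ℕ => ‖G n‖) := by
    apply Summable.of_norm_bounded_eventually (summable_geometric_of_lt_one (by positivity) hTε)
    rw [Nat.cofinite_eq_atTop]
    filter_upwards [hGbound] with n h1
    rwa [Real.norm_eq_abs, abs_of_nonneg (norm_nonneg _)]
  -- summability in H
  have hFsum : Summable F := hFnormsum.of_norm
  have hGsum : Summable G := hGnormsum.of_norm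
  -- term identities
  have hterm1 : ∀ (y : H) (n : ℕ), (inner ℂ y (F n) : ℂ)
      = inner ℂ (PE E ((T' ^ (n + 1)) y)) (PE E ((T ^ (n + 1)) x)) := by
    intro y n
    exact inner_adj_pow E T' (n + 1) y ((T ^ (n + 1)) x)
  have hterm2 : ∀ (y : H) (n : ℕ), (inner ℂ y (G n) : ℂ)
      = inner ℂ (PE E ((Ss ^ n) y)) (PE E ((Ts ^ n) x)) := by
    intro y n
    exact inner_pow E T n y ((Ts ^ n) x)
  have hsum1 : ∀ y : H, Summable (fun n : ℕ =>
      (inner ℂ (PE E ((T' ^ (n + 1)) y)) (PE E ((T ^ (n + 1)) x)) : ℂ)) := by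
    intro y
    have := (hFsum.hasSum.mapL (innerSL ℂ y)).summable
    simpa only [innerSL_apply_apply, hterm1 y] using this
  have hsum2 : ∀ y : H, Summable (fun n : ℕ =>
      (inner ℂ (PE E ((Ss ^ n) y)) (PE E ((Ts ^ n) x)) : ℂ)) := by
    intro y
    have := (hGsum.hasSum.mapL (innerSL ℂ y)).summable
    simpa only [innerSL_apply_apply, hterm2 y] using this
  -- key identity
  have hkey : ∀ y : H, (inner ℂ y ((∑' n, F n) + ∑' n, G n) : ℂ)
      = (∑' n : ℕ, (inner ℂ (PE E ((T' ^ (n + 1)) y)) (PE E ((T ^ (n + 1)) x)) : ℂ))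
        + ∑' n : ℕ, (inner ℂ (PE E ((Ss ^ n) y)) (PE E ((Ts ^ n) x)) : ℂ) := by
    intro y
    rw [inner_add_right]
    have e1 : (inner ℂ y (∑' n, F n) : ℂ) = ∑' n, (inner ℂ y (F n) : ℂ) := by
      have := (hFsum.hasSum.mapL (innerSL ℂ y)).tsum_eq
      simpa only [innerSL_apply_apply] using this.symm
    have e2 : (inner ℂ y (∑' n, G n) : ℂ) = ∑' n, (inner ℂ y (G n) : ℂ) := by
      have := (hGsum.hasSum.mapL (innerSL ℂ y)).tsum_eq
      simpa only [innerSL_apply_apply] using this.symm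
    rw [e1, e2]
    congr 1
    · exact tsum_congr (hterm1 y)
    · exact tsum_congr (hterm2 y)
  refine ⟨hFnormsum, hGnormsum, fun y => ⟨hsum1 y, hsum2 y⟩, ?_⟩
  constructor
  · intro h y
    rw [← hkey y, h]
  · intro h
    apply ext_inner_left ℂ
    intro v
    rw [hkey v, ← h v]
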